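/- Let F, F* be T-tuples of subsets of [n] with coverage values v_i, v*_i as above, ε ∈ (0,1), α ≥ 4 an integer, and let S = {i ∈ [n] : v_i < v*_i / (α(2.25+ε))}. If |S| > n/α, then there exists τ ∈ [T] with φ(F*_τ, F_{-τ}) - φ(F) ≥ εn/(2T). -/

import Mathlib

/-- Coverage value of agent `i` under solution `F`. -/
def cov {n T : ℕ} (F : Fin T → Finset (Fin n)) (i : Fin n) : ℕ :=
  1 + (Finset.univ.filter fun t => i ∈ F t).card

/-- Log social welfare of a solution. -/
noncomputable def phi {n T : ℕ} (F : Fin T → Finset (Fin n)) : ℝ :=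
  ∑ i, Real.log (cov F i)

lemma log_ge {x : ℝ} (hx : 0 < x) : 1 - 1/x ≤ Real.log x := by
  have h := Real.log_le_sub_one_of_pos (show (0:ℝ) < x⁻¹ by positivity)
  rw [Real.log_inv] at h
  have : (1:ℝ)/x = x⁻¹ := one_div x
  linarith

lemma cov_cast {n T : ℕ} (F : Fin T → Finset (Fin n)) (i : Fin n) :
    (cov F i : ℝ) = 1 + ∑ t, (if i ∈ F t then (1:ℝ) else 0) := by
  rw [cov, Finset.card_filter]
  push_cast
  ring

lemma cov_update_real {n T : ℕ} (F : Fin T → Finset (Fin n)) (τ : Fin T)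
    (X : Finset (Fin n)) (i : Fin n) :
    (cov (Function.update F τ X) i : ℝ) =
      (cov F i : ℝ) + (if i ∈ X then 1 else 0) - (if i ∈ F τ then 1 else 0) := by
  rw [cov_cast, cov_cast]
  have hupd : (fun t => if i ∈ Function.update F τ X t then (1:ℝ) else 0)
      = Function.update (fun t => if i ∈ F t then (1:ℝ) else 0) τ (if i ∈ X then 1 else 0) := by
    funext t
    rcases eq_or_ne t τ with rfl | h
    · simp
    · simp [Function.update_of_ne h]
  rw [show (∑ t, if i ∈ Function.update F τ X t then (1:ℝ) else 0)
      = ∑ t, Function.update (fun t => if i ∈ F t then (1:ℝ) else 0) τ (if i ∈ X then 1 else 0) t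
      from by rw [← hupd]]
  rw [Finset.sum_update_of_mem (Finset.mem_univ τ)]
  have := Finset.sum_eq_sum_sdiff_singleton_add (Finset.mem_univ τ)
    (fun t => if i ∈ F t then (1:ℝ) else 0)
  linarith

lemma loss_bound {m v : ℝ} (hm0 : 0 ≤ m) (hmv : m ≤ v - 1) :
    -1 ≤ m * (Real.log (v-1) - Real.log v) := by
  rcases eq_or_lt_of_le hm0 with h | h
  · rw [← h]; norm_num
  · have hv1 : 0 < v - 1 := lt_of_lt_of_le h hmv
    have hv : 0 < v := by linarith
    have hlog : Real.log v - Real.log (v-1) ≤ 1/(v-1) := by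
      have h1 := Real.log_le_sub_one_of_pos (show 0 < v/(v-1) by positivity)
      rw [Real.log_div (ne_of_gt hv) (ne_of_gt hv1)] at h1
      have h2 : v/(v-1) - 1 = 1/(v-1) := by field_simp; ring
      linarith
    have hml : m * (Real.log v - Real.log (v-1)) ≤ m * (1/(v-1)) :=
      mul_le_mul_of_nonneg_left hlog hm0
    have hle : m * (1/(v-1)) ≤ 1 := by
      rw [mul_one_div, div_le_one hv1]; linarith
    nlinarith

lemma gain_bound {k v c : ℝ} (hv : 1 ≤ v) (hc : 2 ≤ c) (hk : (c-1)*v ≤ k) :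
    (c-1)/2 ≤ k * (Real.log (v+1) - Real.log v) := by
  have hv0 : 0 < v := by linarith
  have hlog : 1/(v+1) ≤ Real.log (v+1) - Real.log v := by
    have h1 := log_ge (show 0 < (v+1)/v by positivity)
    rw [Real.log_div (by linarith) (ne_of_gt hv0)] at h1
    have h2 : 1 - 1/((v+1)/v) = 1/(v+1) := by
      rw [one_div_div]
      field_simp
      ring
    linarith
  have hk0 : 0 ≤ k := le_trans (by nlinarith) hk
  have h3 : (c-1)*v * (1/(v+1)) ≤ k * (Real.log (v+1) - Real.log v) :=
    mul_le_mul hk hlog (by positivity) hk0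
  have h4 : (c-1)/2 ≤ (c-1)*v*(1/(v+1)) := by
    rw [mul_one_div, div_le_div_iff₀ (by norm_num) (by linarith)]
    nlinarith
  linarith

theorem exists_good_update {n T : ℕ} (hn : 0 < n) (hT : 0 < T)
    (F Fstar : Fin T → Finset (Fin n)) (ε : ℝ) (hε : ε ∈ Set.Ioo (0 : ℝ) 1)
    (α : ℕ) (hα : 4 ≤ α)
    (S : Finset (Fin n))
    (hS : S = Finset.univ.filter
      (fun i => (cov F i : ℝ) < (cov Fstar i : ℝ) / (α * (2.25 + ε))))
    (hcard : (S.card : ℝ) > n / α) :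
    ∃ τ : Fin T,
      phi (Function.update F τ (Fstar τ)) - phi F ≥ ε * n / (2 * T) := by
  classical
  obtain ⟨hε0, hε1⟩ := hε
  have hα' : (4:ℝ) ≤ (α:ℝ) := by exact_mod_cast hα
  have hαpos : (0:ℝ) < (α:ℝ) := by linarith
  set c : ℝ := (α:ℝ) * (2.25 + ε) with hc
  have hc9 : (9:ℝ) ≤ c := by rw [hc]; nlinarith
  set d : Fin n → Fin T → ℝ := fun i τ =>
    Real.log (cov (Function.update F τ (Fstar τ)) i) - Real.log (cov F i) with hd_def
  have covF_ge1 : ∀ i, (1:ℝ) ≤ (cov F i : ℝ) := by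
    intro i
    have : 1 ≤ cov F i := Nat.le_add_right 1 _
    exact_mod_cast this
  have covF_pos : ∀ i, (0:ℝ) < (cov F i : ℝ) := fun i => lt_of_lt_of_le one_pos (covF_ge1 i)
  -- pointwise formula
  have hpt : ∀ i τ, d i τ =
      (if i ∈ Fstar τ ∧ i ∉ F τ then
        Real.log ((cov F i : ℝ) + 1) - Real.log (cov F i) else 0)
    + (if i ∈ F τ ∧ i ∉ Fstar τ then
        Real.log ((cov F i : ℝ) - 1) - Real.log (cov F i) else 0) := by
    intro i τ
    have h := cov_update_real F τ (Fstar τ) i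
    simp only [hd_def]
    by_cases h1 : i ∈ F τ <;> by_cases h2 : i ∈ Fstar τ
    · rw [if_neg (by simp [h1]), if_neg (by simp [h2]),
        show ((cov (Function.update F τ (Fstar τ)) i : ℝ)) = (cov F i : ℝ) from by
          rw [h]; simp [h1, h2]]
      ring
    · rw [if_neg (by simp [h2]), if_pos ⟨h1, h2⟩,
        show ((cov (Function.update F τ (Fstar τ)) i : ℝ)) = (cov F i : ℝ) - 1 from by
          rw [h]; simp [h1, h2]]
      ring
    · rw [if_pos ⟨h2, h1⟩, if_neg (by simp [h1]),
        show ((cov (Function.update F τ (Fstar τ)) i : ℝ)) = (cov F i : ℝ) + 1 from by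
          rw [h]; simp [h1, h2]]
      ring
    · rw [if_neg (by simp [h2]), if_neg (by simp [h1]),
        show ((cov (Function.update F τ (Fstar τ)) i : ℝ)) = (cov F i : ℝ) from by
          rw [h]; simp [h1, h2]]
      ring
  -- per-agent sum over rounds
  have hsum_d : ∀ i, ∑ τ, d i τ =
      ((Finset.univ.filter fun τ => i ∈ Fstar τ ∧ i ∉ F τ).card : ℝ)
        * (Real.log ((cov F i : ℝ) + 1) - Real.log (cov F i))
    + ((Finset.univ.filter fun τ => i ∈ F τ ∧ i ∉ Fstar τ).card : ℝ)
        * (Real.log ((cov F i : ℝ) - 1) - Real.log (cov F i)) := by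
    intro i
    calc ∑ τ, d i τ = ∑ τ, ((if i ∈ Fstar τ ∧ i ∉ F τ then
        Real.log ((cov F i : ℝ) + 1) - Real.log (cov F i) else 0)
      + (if i ∈ F τ ∧ i ∉ Fstar τ then
        Real.log ((cov F i : ℝ) - 1) - Real.log (cov F i) else 0)) :=
        Finset.sum_congr rfl (fun τ _ => hpt i τ)
    _ = _ := by
        rw [Finset.sum_add_distrib, ← Finset.sum_filter, ← Finset.sum_filter,
          Finset.sum_const, Finset.sum_const, nsmul_eq_mul, nsmul_eq_mul]
  -- loss card bound
  have hlcard : ∀ i, ((Finset.univ.filter fun τ => i ∈ F τ ∧ i ∉ Fstar τ).card : ℝ)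
      ≤ (cov F i : ℝ) - 1 := by
    intro i
    have hsub : (Finset.univ.filter fun τ => i ∈ F τ ∧ i ∉ Fstar τ)
        ⊆ (Finset.univ.filter fun τ => i ∈ F τ) := by
      intro x hx
      simp only [Finset.mem_filter] at hx ⊢
      exact ⟨hx.1, hx.2.1⟩
    have h1 : ((Finset.univ.filter fun τ => i ∈ F τ ∧ i ∉ Fstar τ).card : ℝ)
        ≤ ((Finset.univ.filter fun τ => i ∈ F τ).card : ℝ) := by
      exact_mod_cast Finset.card_le_card hsub
    have h2 : (cov F i : ℝ) = 1 + ((Finset.univ.filter fun τ => i ∈ F τ).card : ℝ) := by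
      rw [cov]; push_cast; ring
    linarith
  -- loss term bound
  have hloss : ∀ i, -1 ≤ ((Finset.univ.filter fun τ => i ∈ F τ ∧ i ∉ Fstar τ).card : ℝ)
        * (Real.log ((cov F i : ℝ) - 1) - Real.log (cov F i)) :=
    fun i => loss_bound (by positivity) (hlcard i)
  -- gain card bound
  have hgcard : ∀ i, (cov Fstar i : ℝ) - (cov F i : ℝ)
      ≤ ((Finset.univ.filter fun τ => i ∈ Fstar τ ∧ i ∉ F τ).card : ℝ) := by
    intro i
    have hsub : ((Finset.univ.filter fun τ => i ∈ Fstar τ)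
          \ (Finset.univ.filter fun τ => i ∈ F τ))
        ⊆ (Finset.univ.filter fun τ => i ∈ Fstar τ ∧ i ∉ F τ) := by
      intro x hx
      simp only [Finset.mem_sdiff, Finset.mem_filter, Finset.mem_univ, true_and] at hx ⊢
      exact ⟨hx.1, hx.2⟩
    have h1 := Finset.card_le_card_sdiff_add_card
      (s := Finset.univ.filter fun τ => i ∈ Fstar τ)
      (t := Finset.univ.filter fun τ => i ∈ F τ)
    have h2 := Finset.card_le_card hsub
    have h3 : (cov F i : ℝ) = 1 + ((Finset.univ.filter fun τ => i ∈ F τ).card : ℝ) := by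
      rw [cov]; push_cast; ring
    have h4 : (cov Fstar i : ℝ) = 1 + ((Finset.univ.filter fun τ => i ∈ Fstar τ).card : ℝ) := by
      rw [cov]; push_cast; ring
    have h1' : ((Finset.univ.filter fun τ => i ∈ Fstar τ).card : ℝ)
        ≤ (((Finset.univ.filter fun τ => i ∈ Fstar τ)
            \ (Finset.univ.filter fun τ => i ∈ F τ)).card : ℝ)
          + ((Finset.univ.filter fun τ => i ∈ F τ).card : ℝ) := by exact_mod_cast h1
    have h2' : (((Finset.univ.filter fun τ => i ∈ Fstar τ)
            \ (Finset.univ.filter fun τ => i ∈ F τ)).card : ℝ)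
        ≤ ((Finset.univ.filter fun τ => i ∈ Fstar τ ∧ i ∉ F τ).card : ℝ) := by exact_mod_cast h2
    linarith
  -- bound for all agents
  have hDall : ∀ i : Fin n, (-1:ℝ) ≤ ∑ τ, d i τ := by
    intro i
    rw [hsum_d i]
    have hgain0 : (0:ℝ) ≤ ((Finset.univ.filter fun τ => i ∈ Fstar τ ∧ i ∉ F τ).card : ℝ)
        * (Real.log ((cov F i : ℝ) + 1) - Real.log (cov F i)) := by
      apply mul_nonneg (by positivity)
      have : Real.log ((cov F i : ℝ)) ≤ Real.log ((cov F i : ℝ) + 1) :=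
        Real.log_le_log (covF_pos i) (by linarith)
      linarith
    have := hloss i
    linarith
  -- bound for agents in S
  have hDS : ∀ i ∈ S, (c-1)/2 - 1 ≤ ∑ τ, d i τ := by
    intro i hi
    rw [hS, Finset.mem_filter] at hi
    have hiS : (cov F i : ℝ) < (cov Fstar i : ℝ) / c := hi.2
    have hcv : c * (cov F i : ℝ) < (cov Fstar i : ℝ) := by
      rw [lt_div_iff₀ (by linarith : (0:ℝ) < c)] at hiS
      linarith
    have hk : (c-1) * (cov F i : ℝ)
        ≤ ((Finset.univ.filter fun τ => i ∈ Fstar τ ∧ i ∉ F τ).card : ℝ) := by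
      have := hgcard i
      nlinarith [covF_ge1 i]
    rw [hsum_d i]
    have hg := gain_bound (covF_ge1 i) (by linarith : (2:ℝ) ≤ c) hk
    have hl := hloss i
    linarith
  -- total bound
  have hScard_le : (S.card : ℝ) ≤ (n:ℝ) := by
    have h := Finset.card_le_univ S
    rw [Fintype.card_fin] at h
    exact_mod_cast h
  have hcompl : ((Sᶜ : Finset (Fin n)).card : ℝ) = (n:ℝ) - S.card := by
    have := Finset.card_compl S
    rw [this, Fintype.card_fin]
    have : S.card ≤ n := by exact_mod_cast hScard_le
    push_cast [Nat.cast_sub this]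
    ring
  have htotal : ε * n / 2 ≤ ∑ i, ∑ τ, d i τ := by
    have hsplit := Finset.sum_add_sum_compl S (fun i => ∑ τ, d i τ)
    have hSsum : (S.card : ℝ) * ((c-1)/2 - 1) ≤ ∑ i ∈ S, ∑ τ, d i τ := by
      have := Finset.card_nsmul_le_sum S (fun i => ∑ τ, d i τ) ((c-1)/2 - 1) hDS
      rwa [nsmul_eq_mul] at this
    have hCsum : -((n:ℝ) - S.card) ≤ ∑ i ∈ Sᶜ, ∑ τ, d i τ := by
      have := Finset.card_nsmul_le_sum Sᶜ (fun i => ∑ τ, d i τ) (-1)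
        (fun i _ => hDall i)
      rw [nsmul_eq_mul, hcompl] at this
      linarith
    have hns : (n:ℝ) < (α:ℝ) * S.card := by
      rw [gt_iff_lt, div_lt_iff₀ hαpos] at hcard
      linarith
    have hnum : ε * n / 2 ≤ (S.card : ℝ) * ((c-1)/2 - 1) + (-((n:ℝ) - S.card)) := by
      rw [hc]
      nlinarith [hns, hScard_le, mul_nonneg (le_of_lt hε0) (Nat.cast_nonneg n),
        mul_pos hε0 hαpos]
    linarith
  -- averaging
  have hswap : ∑ τ : Fin T, ∑ i, d i τ = ∑ i, ∑ τ, d i τ := Finset.sum_comm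
  have hphi : ∀ τ, phi (Function.update F τ (Fstar τ)) - phi F = ∑ i, d i τ := by
    intro τ
    rw [phi, phi, ← Finset.sum_sub_distrib]
  have hT' : (0:ℝ) < (T:ℝ) := by exact_mod_cast hT
  have hkey : ∑ τ : Fin T, (ε * n / (2 * T))
      ≤ ∑ τ : Fin T, (phi (Function.update F τ (Fstar τ)) - phi F) := by
    rw [Finset.sum_const, Finset.card_univ, Fintype.card_fin, nsmul_eq_mul]
    have : (T:ℝ) * (ε * n / (2 * T)) = ε * n / 2 := by field_simp
    rw [this]
    calc ε * n / 2 ≤ ∑ i, ∑ τ, d i τ := htotal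
    _ = ∑ τ : Fin T, ∑ i, d i τ := hswap.symm
    _ = ∑ τ : Fin T, (phi (Function.update F τ (Fstar τ)) - phi F) :=
        Finset.sum_congr rfl (fun τ _ => (hphi τ).symm)
  have hne : (Finset.univ : Finset (Fin T)).Nonempty := ⟨⟨0, hT⟩, Finset.mem_univ _⟩
  obtain ⟨τ, _, hτ⟩ := Finset.exists_le_of_sum_le hne hkey
  exact ⟨τ, hτ⟩
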